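/- Consider the goods instance with two agents a, b and three goods g_1, g_2, g_3, where v_{a g_1} = 1, v_{a g_2} = 0, v_{a g_3} = 2 and v_{b g_1} = 0, v_{b g_2} = 1, v_{b g_3} = 2. No allocation of the three goods is both PropM0 and Pareto-optimal. -/

import Mathlib

open scoped Classical
open Finset

noncomputable section FairDivision

variable {N I : Type*}

/-- Additive value of agent `i` for a bundle `S`. -/
def bval (v : N → I → ℝ) (i : N) (S : Finset I) : ℝ := ∑ j ∈ S, v i j

/-- `x` is an allocation of the item set `S`: the bundles are pairwise disjoint
and together cover exactly `S`. -/
def IsAllocation [Fintype N] (x : N → Finset I) (S : Finset I) : Prop :=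
  (∀ i h : N, i ≠ h → Disjoint (x i) (x h)) ∧ Finset.univ.biUnion x = S

/-- Envy-freeness up to any item (mixed manna version). -/
def EFX (v : N → I → ℝ) (x : N → Finset I) : Prop :=
  ∀ i h : N,
    (∀ g ∈ x h, 0 < v i g → bval v i (x i) ≥ bval v i ((x h).erase g)) ∨
    (∀ c ∈ x i, v i c < 0 → bval v i ((x i).erase c) ≥ bval v i (x h))

/-- The stronger notion EFX₀, where goods of zero value are also considered. -/
def EFX0 (v : N → I → ℝ) (x : N → Finset I) : Prop :=
  ∀ i h : N,
    (∀ g ∈ x h, 0 ≤ v i g → bval v i (x i) ≥ bval v i ((x h).erase g)) ∨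
    (∀ c ∈ x i, v i c < 0 → bval v i ((x i).erase c) ≥ bval v i (x h))

/-- `dpos v x i`: the maximin good value `d_i(x)`: the maximum, over agents `h ≠ i`
whose bundle contains an item valued positively by `i`, of the minimum value
(for `i`) of such an item in `x h`; `0` if no such agent exists. -/
def dpos [Fintype N] (v : N → I → ℝ) (x : N → Finset I) (i : N) : ℝ :=
  if hA : (Finset.univ.filter fun h =>
      h ≠ i ∧ ((x h).filter fun j => 0 < v i j).Nonempty).Nonempty then
    (Finset.univ.filter fun h =>
        h ≠ i ∧ ((x h).filter fun j => 0 < v i j).Nonempty).sup' hA fun h =>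
      if hB : ((x h).filter fun j => 0 < v i j).Nonempty then
        ((x h).filter fun j => 0 < v i j).inf' hB fun j => v i j
      else 0
  else 0

/-- `dnn v x i`: the variant `d⁰_i(x)` of the maximin good value where
nonnegatively-valued items are considered. -/
def dnn [Fintype N] (v : N → I → ℝ) (x : N → Finset I) (i : N) : ℝ :=
  if hA : (Finset.univ.filter fun h =>
      h ≠ i ∧ ((x h).filter fun j => 0 ≤ v i j).Nonempty).Nonempty then
    (Finset.univ.filter fun h =>
        h ≠ i ∧ ((x h).filter fun j => 0 ≤ v i j).Nonempty).sup' hA fun h =>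
      if hB : ((x h).filter fun j => 0 ≤ v i j).Nonempty then
        ((x h).filter fun j => 0 ≤ v i j).inf' hB fun j => v i j
      else 0
  else 0

/-- Proportional share of agent `i`. -/
def propShare [Fintype N] (v : N → I → ℝ) (M : Finset I) (i : N) : ℝ :=
  bval v i M / (Fintype.card N : ℝ)

/-- Proportionality up to the maximin good or any bad. -/
def PropMX [Fintype N] (v : N → I → ℝ) (M : Finset I) (x : N → Finset I) : Prop :=
  ∀ i : N,
    bval v i (x i) + dpos v x i ≥ propShare v M i ∨
    (∀ c ∈ x i, v i c < 0 → bval v i ((x i).erase c) ≥ propShare v M i)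

/-- The stronger notion PropMX₀. -/
def PropMX0 [Fintype N] (v : N → I → ℝ) (M : Finset I) (x : N → Finset I) : Prop :=
  ∀ i : N,
    bval v i (x i) + dnn v x i ≥ propShare v M i ∨
    (∀ c ∈ x i, v i c < 0 → bval v i ((x i).erase c) ≥ propShare v M i)

/-- Utilitarian social welfare. -/
def SW [Fintype N] (v : N → I → ℝ) (x : N → Finset I) : ℝ :=
  ∑ i : N, bval v i (x i)

/-- `y` Pareto-dominates `x`. -/
def ParetoDominates [Fintype N] (v : N → I → ℝ) (y x : N → Finset I) : Prop :=
  (∀ i : N, bval v i (y i) ≥ bval v i (x i)) ∧ ∃ h : N, bval v h (y h) > bval v h (x h)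

/-- `x` is Pareto-optimal among allocations of `M`. -/
def ParetoOptimal [Fintype N] (v : N → I → ℝ) (M : Finset I) (x : N → Finset I) : Prop :=
  ¬ ∃ y : N → Finset I, IsAllocation y M ∧ ParetoDominates v y x

/-- `x` maximizes the social welfare over all allocations of `M`. -/
def MaxSW [Fintype N] (v : N → I → ℝ) (M : Finset I) (x : N → Finset I) : Prop :=
  ∀ y : N → Finset I, IsAllocation y M → SW v y ≤ SW v x

/-- A set `B` of (pure bad) items is identically ordered (IDO): it can be enumerated
as `c₁, …, c_k` with `v i c₁ ≤ v i c₂ ≤ … ≤ v i c_k` for every agent `i`. -/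
def IDO (v : N → I → ℝ) (B : Finset I) : Prop :=
  ∃ l : List I, l.Nodup ∧ l.toFinset = B ∧ ∀ i : N, (l.map (v i)).Pairwise (· ≤ ·)

end FairDivision

/-- The valuations of the counterexample: two agents `a, b` and three goods,
with `v a = (1, 0, 2)` and `v b = (0, 1, 2)`. -/
def vPropM0 : Fin 2 → Fin 3 → ℝ := ![![1, 0, 2], ![0, 1, 2]]

/-- In the goods instance `vPropM0`, no allocation of the three
goods is both PropM₀ and Pareto-optimal. -/
lemma dnn_le2 (v : Fin 2 → Fin 3 → ℝ) (x : Fin 2 → Finset (Fin 3)) (i : Fin 2) (c : ℝ)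
    (hc : 0 ≤ c)
    (H : ∀ h : Fin 2, h ≠ i → ∀ j ∈ (x h).filter fun j => 0 ≤ v i j, ∃ j' ∈ (x h).filter fun j => 0 ≤ v i j, v i j' ≤ c) :
    dnn v x i ≤ c := by
  unfold dnn
  split
  · next hA =>
    apply Finset.sup'_le
    intro h hh
    simp only [Finset.mem_filter] at hh
    obtain ⟨-, hne, hB⟩ := hh
    rw [dif_pos hB]
    obtain ⟨j, hj⟩ := hB
    obtain ⟨j', hj', hle⟩ := H h hne j hj
    exact le_trans (Finset.inf'_le _ hj') hle
  · exact hc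

lemma bval_empty (v : Fin 2 → Fin 3 → ℝ) (i : Fin 2) : bval v i ∅ = 0 := rfl
lemma bval_single (v : Fin 2 → Fin 3 → ℝ) (i : Fin 2) (a : Fin 3) : bval v i {a} = v i a :=
  Finset.sum_singleton _ _
lemma bval_pair (v : Fin 2 → Fin 3 → ℝ) (i : Fin 2) (a b : Fin 3) (hab : a ≠ b) :
    bval v i {a, b} = v i a + v i b := Finset.sum_pair hab
lemma bval01 (v : Fin 2 → Fin 3 → ℝ) (i : Fin 2) : bval v i ({0,1} : Finset (Fin 3)) = v i 0 + v i 1 := Finset.sum_pair (by decide)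
lemma bval02 (v : Fin 2 → Fin 3 → ℝ) (i : Fin 2) : bval v i ({0,2} : Finset (Fin 3)) = v i 0 + v i 2 := Finset.sum_pair (by decide)
lemma bval12 (v : Fin 2 → Fin 3 → ℝ) (i : Fin 2) : bval v i ({1,2} : Finset (Fin 3)) = v i 1 + v i 2 := Finset.sum_pair (by decide)
lemma bval_triple (v : Fin 2 → Fin 3 → ℝ) (i : Fin 2) :
    bval v i {0, 1, 2} = v i 0 + v i 1 + v i 2 := by
  unfold bval
  rw [Finset.sum_insert (by decide), Finset.sum_pair (by decide)]
  ring

theorem no_propm0_po_allocation :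
    ¬ ∃ x : Fin 2 → Finset (Fin 3),
      IsAllocation x (Finset.univ : Finset (Fin 3)) ∧
      (∀ i : Fin 2, bval vPropM0 i (x i) + dnn vPropM0 x i ≥
        propShare vPropM0 Finset.univ i) ∧
      ParetoOptimal vPropM0 Finset.univ x := by
  rintro ⟨x, ⟨hdisj, hcover⟩, hprop, hpo⟩
  have hx1 : x 1 = (x 0)ᶜ := by
    ext j
    simp only [Finset.mem_compl]
    constructor
    · intro hj hj0
      exact Finset.disjoint_left.mp (hdisj 0 1 (by decide)) hj0 hj
    · intro hj0
      have h := (Finset.ext_iff.mp hcover j).mpr (Finset.mem_univ j)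
      simp only [Finset.mem_biUnion] at h
      rcases h with ⟨i, _, hi⟩
      fin_cases i
      · exact absurd hi hj0
      · exact hi
  have hx : x = ![x 0, (x 0)ᶜ] := by
    funext i; fin_cases i <;> simp [hx1]
  rw [hx] at hprop hpo
  set s := x 0 with hs
  clear_value s
  clear hx hx1 hcover hdisj hs
  have hcase : s = ∅ ∨ s = {0} ∨ s = {1} ∨ s = {2} ∨ s = {0,1} ∨ s = {0,2} ∨ s = {1,2} ∨ s = {0,1,2} := by
    fin_cases s <;> decide
  have hps : ∀ i : Fin 2, propShare vPropM0 (Finset.univ : Finset (Fin 3)) i = 3/2 := by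
    intro i; fin_cases i <;> norm_num [propShare, bval, Fin.sum_univ_three, vPropM0, Matrix.cons_val_two, Matrix.tail_cons, Matrix.head_cons]
  rcases hcase with rfl | rfl | rfl | rfl | rfl | rfl | rfl | rfl
  · rw [show ((∅ : Finset (Fin 3)))ᶜ = ({0,1,2} : Finset (Fin 3)) from by decide] at hprop hpo
    have h := hprop 0
    rw [hps 0] at h
    have hd : dnn vPropM0 ![(∅ : Finset (Fin 3)), ({0,1,2} : Finset (Fin 3))] 0 ≤ 0 := by
      apply dnn_le2 _ _ _ _ (by norm_num)
      intro h hh j hj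
      refine ⟨1, ?_, by norm_num [vPropM0]⟩
      simp only [Finset.mem_filter]
      fin_cases h
      · exact absurd rfl hh
      · exact ⟨by decide, by norm_num [vPropM0]⟩
    have hb : bval vPropM0 0 (![(∅ : Finset (Fin 3)), ({0,1,2} : Finset (Fin 3))] 0) ≤ 0 := by
      norm_num [bval_empty, bval_single, bval01, bval02, bval12, bval_triple, vPropM0]
    linarith
  · rw [show (({0} : Finset (Fin 3)))ᶜ = ({1,2} : Finset (Fin 3)) from by decide] at hprop hpo
    have h := hprop 0
    rw [hps 0] at h
    have hd : dnn vPropM0 ![({0} : Finset (Fin 3)), ({1,2} : Finset (Fin 3))] 0 ≤ 0 := by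
      apply dnn_le2 _ _ _ _ (by norm_num)
      intro h hh j hj
      refine ⟨1, ?_, by norm_num [vPropM0]⟩
      simp only [Finset.mem_filter]
      fin_cases h
      · exact absurd rfl hh
      · exact ⟨by decide, by norm_num [vPropM0]⟩
    have hb : bval vPropM0 0 (![({0} : Finset (Fin 3)), ({1,2} : Finset (Fin 3))] 0) ≤ 1 := by
      norm_num [bval_empty, bval_single, bval01, bval02, bval12, bval_triple, vPropM0]
    linarith
  · rw [show (({1} : Finset (Fin 3)))ᶜ = ({0,2} : Finset (Fin 3)) from by decide] at hprop hpo
    have h := hprop 0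
    rw [hps 0] at h
    have hd : dnn vPropM0 ![({1} : Finset (Fin 3)), ({0,2} : Finset (Fin 3))] 0 ≤ 1 := by
      apply dnn_le2 _ _ _ _ (by norm_num)
      intro h hh j hj
      refine ⟨0, ?_, by norm_num [vPropM0]⟩
      simp only [Finset.mem_filter]
      fin_cases h
      · exact absurd rfl hh
      · exact ⟨by decide, by norm_num [vPropM0]⟩
    have hb : bval vPropM0 0 (![({1} : Finset (Fin 3)), ({0,2} : Finset (Fin 3))] 0) ≤ 0 := by
      norm_num [bval_empty, bval_single, bval01, bval02, bval12, bval_triple, vPropM0]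
    linarith
  · rw [show (({2} : Finset (Fin 3)))ᶜ = ({0,1} : Finset (Fin 3)) from by decide] at hprop hpo
    refine hpo ⟨![({0,2} : Finset (Fin 3)), {1}], ⟨?_, ?_⟩, ?_, 0, ?_⟩
    · intro i h hih
      fin_cases i <;> fin_cases h <;> first | (exact absurd rfl hih) | decide
    · ext j; simp only [Finset.mem_biUnion, Finset.mem_univ, true_and, iff_true]
      fin_cases j
      · exact ⟨0, by decide⟩
      · exact ⟨1, by decide⟩
      · exact ⟨0, by decide⟩
    · intro i
      fin_cases i <;> norm_num [bval_empty, bval_single, bval01, bval02, bval12, bval_triple, vPropM0]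
    · norm_num [bval_empty, bval_single, bval01, bval02, bval12, bval_triple, vPropM0]
  · rw [show (({0,1} : Finset (Fin 3)))ᶜ = ({2} : Finset (Fin 3)) from by decide] at hprop hpo
    refine hpo ⟨![({0} : Finset (Fin 3)), {1,2}], ⟨?_, ?_⟩, ?_, 1, ?_⟩
    · intro i h hih
      fin_cases i <;> fin_cases h <;> first | (exact absurd rfl hih) | decide
    · ext j; simp only [Finset.mem_biUnion, Finset.mem_univ, true_and, iff_true]
      fin_cases j
      · exact ⟨0, by decide⟩
      · exact ⟨1, by decide⟩
      · exact ⟨1, by decide⟩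
    · intro i
      fin_cases i <;> norm_num [bval_empty, bval_single, bval01, bval02, bval12, bval_triple, vPropM0]
    · norm_num [bval_empty, bval_single, bval01, bval02, bval12, bval_triple, vPropM0]
  · rw [show (({0,2} : Finset (Fin 3)))ᶜ = ({1} : Finset (Fin 3)) from by decide] at hprop hpo
    have h := hprop 1
    rw [hps 1] at h
    have hd : dnn vPropM0 ![({0,2} : Finset (Fin 3)), ({1} : Finset (Fin 3))] 1 ≤ 0 := by
      apply dnn_le2 _ _ _ _ (by norm_num)
      intro h hh j hj
      refine ⟨0, ?_, by norm_num [vPropM0]⟩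
      simp only [Finset.mem_filter]
      fin_cases h
      · exact ⟨by decide, by norm_num [vPropM0]⟩
      · exact absurd rfl hh
    have hb : bval vPropM0 1 (![({0,2} : Finset (Fin 3)), ({1} : Finset (Fin 3))] 1) ≤ 1 := by
      norm_num [bval_empty, bval_single, bval01, bval02, bval12, bval_triple, vPropM0]
    linarith
  · rw [show (({1,2} : Finset (Fin 3)))ᶜ = ({0} : Finset (Fin 3)) from by decide] at hprop hpo
    have h := hprop 1
    rw [hps 1] at h
    have hd : dnn vPropM0 ![({1,2} : Finset (Fin 3)), ({0} : Finset (Fin 3))] 1 ≤ 1 := by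
      apply dnn_le2 _ _ _ _ (by norm_num)
      intro h hh j hj
      refine ⟨1, ?_, by norm_num [vPropM0]⟩
      simp only [Finset.mem_filter]
      fin_cases h
      · exact ⟨by decide, by norm_num [vPropM0]⟩
      · exact absurd rfl hh
    have hb : bval vPropM0 1 (![({1,2} : Finset (Fin 3)), ({0} : Finset (Fin 3))] 1) ≤ 0 := by
      norm_num [bval_empty, bval_single, bval01, bval02, bval12, bval_triple, vPropM0]
    linarith
  · rw [show (({0,1,2} : Finset (Fin 3)))ᶜ = (∅ : Finset (Fin 3)) from by decide] at hprop hpo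
    have h := hprop 1
    rw [hps 1] at h
    have hd : dnn vPropM0 ![({0,1,2} : Finset (Fin 3)), (∅ : Finset (Fin 3))] 1 ≤ 0 := by
      apply dnn_le2 _ _ _ _ (by norm_num)
      intro h hh j hj
      refine ⟨0, ?_, by norm_num [vPropM0]⟩
      simp only [Finset.mem_filter]
      fin_cases h
      · exact ⟨by decide, by norm_num [vPropM0]⟩
      · exact absurd rfl hh
    have hb : bval vPropM0 1 (![({0,1,2} : Finset (Fin 3)), (∅ : Finset (Fin 3))] 1) ≤ 0 := by
      norm_num [bval_empty, bval_single, bval01, bval02, bval12, bval_triple, vPropM0]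
    linarith
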